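/- Let A be an S-ring over a finite group G and X a basic set of A. Suppose H ≤ G is a subgroup with X ∩ H ≠ ∅, X \ H ≠ ∅, and H ≤ rad(X \ H). Then X = ⟨X⟩ \ rad(X), and rad(X) ≤ H ∩ ⟨X⟩. -/

import Mathlib

open scoped BigOperators Pointwise Classical

noncomputable section

/-- The group-ring element `X̄ = Σ_{x∈X} x` in `ℤG`. -/
def ind {G : Type*} [Group G] (X : Finset G) : MonoidAlgebra ℤ G :=
  ∑ x ∈ X, MonoidAlgebra.single x 1

/-- The ℤ-span of the class sums of the members of `S`. -/
def spanA {G : Type*} [Group G] (S : Finset (Finset G)) :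
    Submodule ℤ (MonoidAlgebra ℤ G) :=
  Submodule.span ℤ (ind '' (S : Set (Finset G)))

/-- `S` is the partition of basic sets of an S-ring over `G`. -/
structure IsSRing {G : Type*} [Group G] (S : Finset (Finset G)) : Prop where
  cover : ∀ g : G, ∃ X ∈ S, g ∈ X
  disj : ∀ X ∈ S, ∀ Y ∈ S, X ≠ Y → Disjoint X Y
  nonempty : ∀ X ∈ S, X.Nonempty
  one_mem : ({1} : Finset G) ∈ S
  inv_mem : ∀ X ∈ S, X.image (·⁻¹) ∈ S
  mul_closed : ∀ a ∈ spanA S, ∀ b ∈ spanA S, a * b ∈ spanA S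

/-- `X` is an `A`-set: its class sum lies in the span of the basic class sums. -/
def IsASet {G : Type*} [Group G] (S : Finset (Finset G)) (X : Finset G) : Prop :=
  ind X ∈ spanA S

/-- The finset underlying a subgroup of a finite group. -/
def subgroupFinset {G : Type*} [Group G] [Fintype G] (H : Subgroup G) : Finset G :=
  Finset.univ.filter (· ∈ H)

/-- `H` is an `A`-subgroup. -/
def IsASubgroup {G : Type*} [Group G] [Fintype G] (S : Finset (Finset G))
    (H : Subgroup G) : Prop :=
  IsASet S (subgroupFinset H)

/-- The radical `rad(X) = {g : gX = Xg = X}` as a subgroup. -/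
def radSubgroup {G : Type*} [Group G] (X : Finset G) : Subgroup G where
  carrier := {g : G | X.image (g * ·) = X ∧ X.image (· * g) = X}
  one_mem' := by
    constructor <;> · simp only [one_mul, mul_one]; exact Finset.image_id
  mul_mem' := by
    rintro a b ⟨ha1, ha2⟩ ⟨hb1, hb2⟩
    constructor
    · have : X.image (a * b * ·) = (X.image (b * ·)).image (a * ·) := by
        rw [Finset.image_image]
        exact Finset.image_congr (fun x _ => by simp [mul_assoc])
      rw [this, hb1, ha1]
    · have : X.image (· * (a * b)) = (X.image (· * a)).image (· * b) := by
        rw [Finset.image_image]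
        exact Finset.image_congr (fun x _ => by simp [mul_assoc])
      rw [this, ha2, hb2]
  inv_mem' := by
    rintro a ⟨ha1, ha2⟩
    constructor
    · have := congrArg (Finset.image (a⁻¹ * ·)) ha1
      rw [Finset.image_image] at this
      have h2 : X.image ((a⁻¹ * ·) ∘ (a * ·)) = X := by
        rw [show ((a⁻¹ * ·) ∘ (a * ·)) = id by funext x; simp, Finset.image_id]
      rw [← this, h2]
    · have := congrArg (Finset.image (· * a⁻¹)) ha2
      rw [Finset.image_image] at this
      have h2 : X.image ((· * a⁻¹) ∘ (· * a)) = X := by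
        rw [show ((· * a⁻¹) ∘ (· * a)) = id by funext x; simp, Finset.image_id]
      rw [← this, h2]

end

section AuxLemmas

variable {G : Type*} [Group G]

lemma ind_apply' (X : Finset G) (g : G) : (ind X).coeff g = if g ∈ X then 1 else 0 := by
  classical
  unfold ind
  rw [MonoidAlgebra.coeff_sum, Finset.sum_apply']
  simp only [MonoidAlgebra.coeff_single]
  rw [Finset.sum_congr rfl (fun x _ => Finsupp.single_apply)]
  rw [Finset.sum_ite_eq' X g (fun _ => (1:ℤ))]

lemma const_on_basic {S : Finset (Finset G)}
    (hdisj : ∀ X ∈ S, ∀ Y ∈ S, X ≠ Y → Disjoint X Y)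
    {a : MonoidAlgebra ℤ G} (ha : a ∈ spanA S) {W : Finset G} (hW : W ∈ S)
    {w1 w2 : G} (hw1 : w1 ∈ W) (hw2 : w2 ∈ W) : a.coeff w1 = a.coeff w2 := by
  classical
  refine Submodule.span_induction ?_ ?_ ?_ ?_ ha
  · rintro x ⟨W', hW', rfl⟩
    rw [ind_apply', ind_apply']
    by_cases hEq : W = W'
    · subst hEq; rw [if_pos hw1, if_pos hw2]
    · have hd := hdisj W hW W' hW' hEq
      rw [if_neg (fun h => (Finset.disjoint_left.mp hd hw1) h),
        if_neg (fun h => (Finset.disjoint_left.mp hd hw2) h)]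
  · rfl
  · intro x y _ _ hx hy
    show (x + y).coeff w1 = (x + y).coeff w2
    rw [MonoidAlgebra.coeff_add, Finsupp.add_apply, Finsupp.add_apply, hx, hy]
  · intro c x _ hx
    show (c • x).coeff w1 = (c • x).coeff w2
    rw [MonoidAlgebra.coeff_smul_apply, MonoidAlgebra.coeff_smul_apply, hx]

lemma ind_mul_eq (X Y : Finset G) :
    ind X * ind Y = ∑ x ∈ X, ∑ y ∈ Y, MonoidAlgebra.single (x * y) (1:ℤ) := by
  unfold ind
  rw [Finset.sum_mul]
  refine Finset.sum_congr rfl (fun x _ => ?_)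
  rw [Finset.mul_sum]
  refine Finset.sum_congr rfl (fun y _ => ?_)
  rw [MonoidAlgebra.single_mul_single, one_mul]

lemma mul_ind_apply (X Y : Finset G) (g : G) :
    (ind X * ind Y).coeff g = ((X.filter (fun x => x⁻¹ * g ∈ Y)).card : ℤ) := by
  classical
  rw [ind_mul_eq, MonoidAlgebra.coeff_sum, Finset.sum_apply']
  have h1 : ∀ x ∈ X, (∑ y ∈ Y, MonoidAlgebra.single (x * y) (1:ℤ)).coeff g
      = if x⁻¹ * g ∈ Y then 1 else 0 := by
    intro x _
    rw [MonoidAlgebra.coeff_sum, Finset.sum_apply']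
    have h2 : ∀ y ∈ Y, (MonoidAlgebra.single (x*y) (1:ℤ)).coeff g
        = if y = x⁻¹ * g then 1 else 0 := by
      intro y _
      rw [show (MonoidAlgebra.single (x*y) (1:ℤ)).coeff g
        = if x*y = g then 1 else 0 from Finsupp.single_apply]
      congr 1
      simp only [eq_iff_iff]
      constructor
      · intro h; rw [← h]; group
      · intro h; rw [h]; group
    rw [Finset.sum_congr rfl h2, Finset.sum_ite_eq' Y (x⁻¹*g) (fun _ => (1:ℤ))]
  rw [Finset.sum_congr rfl h1, Finset.sum_boole]

lemma mem_rad_iff {X : Finset G} {g : G} :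
    g ∈ radSubgroup X ↔ X.image (g * ·) = X ∧ X.image (· * g) = X := Iff.rfl

lemma rad_left {X : Finset G} {g : G} (h : g ∈ radSubgroup X)
    {x : G} (hx : x ∈ X) : g * x ∈ X := by
  have h2 := Finset.mem_image_of_mem (g * ·) hx
  rwa [(mem_rad_iff.mp h).1] at h2

end AuxLemmas

lemma card_filter_split {α : Type*} [DecidableEq α] {Z Y X : Finset α}
    (hu : Z ∪ Y = X) (hd : Disjoint Z Y) (P : α → Prop) [DecidablePred P] :
    (X.filter P).card = (Z.filter P).card + (Y.filter P).card := by
  rw [← hu, Finset.filter_union,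
    Finset.card_union_of_disjoint (Finset.disjoint_filter_filter hd)]

/-- separating group: if a basic set `X` meets both `H` and its
complement and `H ≤ rad(X \ H)`, then `X = ⟨X⟩ \ rad(X)` and
`rad(X) ≤ H ⊓ ⟨X⟩`. -/
theorem stmt10 {G : Type*} [Group G] [Fintype G] (S : Finset (Finset G))
    (hS : IsSRing S) (X : Finset G) (hX : X ∈ S) (H : Subgroup G)
    (h1 : ∃ x ∈ X, x ∈ H) (h2 : ∃ x ∈ X, x ∉ H)
    (h3 : ∀ h ∈ H, h ∈ radSubgroup (X.filter (fun x => x ∉ H))) :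
    (X : Set G) = (Subgroup.closure (X : Set G) : Set G) \ (radSubgroup X : Set G) ∧
    radSubgroup X ≤ H ⊓ Subgroup.closure (X : Set G) := by
  classical
  obtain ⟨z0, hz0X, hz0H⟩ := h1
  obtain ⟨y0, hy0X, hy0H⟩ := h2
  set Y := X.filter (fun x => x ∉ H) with hYdef
  set Z := X.filter (fun x => x ∈ H) with hZdef
  have memY : ∀ {g : G}, g ∈ Y ↔ g ∈ X ∧ g ∉ H := fun {g} => Finset.mem_filter
  have memZ : ∀ {g : G}, g ∈ Z ↔ g ∈ X ∧ g ∈ H := fun {g} => Finset.mem_filter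
  have memHf : ∀ {g : G}, g ∈ subgroupFinset H ↔ g ∈ H := by
    intro g; simp [subgroupFinset]
  have hy0Y : y0 ∈ Y := memY.mpr ⟨hy0X, hy0H⟩
  have hz0Z : z0 ∈ Z := memZ.mpr ⟨hz0X, hz0H⟩
  have hYl : ∀ h, h ∈ H → ∀ {g : G}, g ∈ Y → h * g ∈ Y := by
    intro h hh g hg
    have h4 := Finset.mem_image_of_mem (h * ·) hg
    rwa [(mem_rad_iff.mp (h3 h hh)).1] at h4
  have hYr : ∀ h, h ∈ H → ∀ {g : G}, g ∈ Y → g * h ∈ Y := by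
    intro h hh g hg
    have h4 := Finset.mem_image_of_mem (· * h) hg
    rwa [(mem_rad_iff.mp (h3 h hh)).2] at h4
  have hunion : Z ∪ Y = X := by
    ext a
    simp only [Finset.mem_union, memY, memZ]
    by_cases h : a ∈ H <;> by_cases h' : a ∈ X <;> tauto
  have hdisjZY : Disjoint Z Y := by
    rw [Finset.disjoint_left]
    intro a ha hb
    exact (memY.mp hb).2 (memZ.mp ha).2
  -- constancy of the coefficient of X̄·X̄ on the basic set X
  have hXA : ind X ∈ spanA S := Submodule.subset_span ⟨X, hX, rfl⟩
  have hXXA : ind X * ind X ∈ spanA S := hS.mul_closed _ hXA _ hXA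
  have hconst : ∀ g1, g1 ∈ X → ∀ g2, g2 ∈ X →
      (X.filter (fun x => x⁻¹ * g1 ∈ X)).card = (X.filter (fun x => x⁻¹ * g2 ∈ X)).card := by
    intro g1 hg1 g2 hg2
    have h := const_on_basic hS.disj hXXA hX hg1 hg2
    rw [mul_ind_apply, mul_ind_apply] at h
    exact_mod_cast h
  -- counting bijections
  have hbij : ∀ (t : Finset G), (∀ b, b ∈ t → b ∈ H) → ∀ y, y ∈ Y →
      (Y.filter (fun x => x⁻¹ * y ∈ t)).card = t.card := by
    intro t ht y hy
    refine Finset.card_bij' (fun x _ => x⁻¹ * y) (fun b _ => y * b⁻¹) ?_ ?_ ?_ ?_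
    · intro a ha; exact (Finset.mem_filter.mp ha).2
    · intro b hb
      refine Finset.mem_filter.mpr ⟨hYr b⁻¹ (H.inv_mem (ht b hb)) hy, ?_⟩
      have h4 : (y * b⁻¹)⁻¹ * y = b := by group
      rw [h4]; exact hb
    · intro a _; group
    · intro b _; group
  have hZfull : ∀ y, y ∈ Y → (Z.filter (fun x => x⁻¹ * y ∈ X)).card = Z.card := by
    intro y hy
    rw [Finset.filter_true_of_mem]
    intro x hx
    exact (memY.mp (hYl x⁻¹ (H.inv_mem (memZ.mp hx).2) hy)).1
  have hZtoX : ∀ z, z ∈ Z →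
      (Z.filter (fun x => x⁻¹ * z ∈ X)).card = (Z.filter (fun x => x⁻¹ * z ∈ Z)).card := by
    intro z hz
    have h4 : Z.filter (fun x => x⁻¹ * z ∈ X) = Z.filter (fun x => x⁻¹ * z ∈ Z) := by
      apply Finset.filter_congr
      intro x hx
      constructor
      · intro h5
        exact memZ.mpr ⟨h5, H.mul_mem (H.inv_mem (memZ.mp hx).2) (memZ.mp hz).2⟩
      · intro h5; exact (memZ.mp h5).1
    rw [h4]
  -- X is inverse-closed
  have hXinvEq : X.image (·⁻¹) = X := by
    by_contra hne
    have hdisj := hS.disj _ (hS.inv_mem X hX) _ hX hne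
    have hd : ∀ x, x ∈ X → x⁻¹ ∉ X := by
      intro x hx hc
      exact Finset.disjoint_left.mp hdisj (Finset.mem_image_of_mem _ hx) hc
    have hYempty : Y.filter (fun x => x⁻¹ * z0 ∈ X) = ∅ := by
      rw [Finset.filter_eq_empty_iff]
      intro x hx hc
      have hxH : x ∉ H := (memY.mp hx).2
      have h5 : x⁻¹ * z0 ∉ H := by
        intro hh
        have h6 : x⁻¹ ∈ H := by
          have h7 := H.mul_mem hh (H.inv_mem hz0H)
          rwa [mul_inv_cancel_right] at h7
        exact hxH (by simpa using H.inv_mem h6)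
      have hY2 : x⁻¹ * z0 ∈ Y := memY.mpr ⟨hc, h5⟩
      have hY3 : x⁻¹ ∈ Y := by
        have h8 := hYr z0⁻¹ (H.inv_mem hz0H) hY2
        rwa [mul_inv_cancel_right] at h8
      exact hd x (memY.mp hx).1 (memY.mp hY3).1
    have hMz0 : (X.filter (fun x => x⁻¹ * z0 ∈ X)).card ≤ Z.card := by
      have h9 := Finset.card_filter_le Z (fun x => x⁻¹ * z0 ∈ X)
      rw [card_filter_split hunion hdisjZY (fun x => x⁻¹ * z0 ∈ X), hYempty]
      simpa using h9
    have hMy0 : 2 * Z.card ≤ (X.filter (fun x => x⁻¹ * y0 ∈ X)).card := by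
      rw [card_filter_split hunion hdisjZY (fun x => x⁻¹ * y0 ∈ X), hZfull y0 hy0Y]
      have h5 : (Y.filter (fun x => x⁻¹ * y0 ∈ Z)).card
          ≤ (Y.filter (fun x => x⁻¹ * y0 ∈ X)).card :=
        Finset.card_le_card (fun a ha => Finset.mem_filter.mpr
          ⟨(Finset.mem_filter.mp ha).1, (memZ.mp (Finset.mem_filter.mp ha).2).1⟩)
      have h6 := hbij Z (fun b hb => (memZ.mp hb).2) y0 hy0Y
      omega
    have h7 := hconst y0 hy0X z0 hz0X
    have hZpos : 0 < Z.card := Finset.card_pos.mpr ⟨z0, hz0Z⟩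
    omega
  have hXinv : ∀ x, x ∈ X → x⁻¹ ∈ X := by
    intro x hx
    rw [← hXinvEq]
    exact Finset.mem_image_of_mem _ hx
  have hYinv : ∀ x, x ∈ Y → x⁻¹ ∈ Y := by
    intro x hx
    refine memY.mpr ⟨hXinv x (memY.mp hx).1, fun hh => (memY.mp hx).2 ?_⟩
    simpa using H.inv_mem hh
  have hZinv : ∀ x, x ∈ Z → x⁻¹ ∈ Z := fun x hx =>
    memZ.mpr ⟨hXinv x (memZ.mp hx).1, H.inv_mem (memZ.mp hx).2⟩
  -- exact coefficient computations
  have hYpart : ∀ y, y ∈ Y → (Y.filter (fun x => x⁻¹ * y ∈ X)).card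
      = Z.card + (Y.filter (fun x => x⁻¹ * y ∈ Y)).card := by
    intro y hy
    have hcongr : Y.filter (fun x => x⁻¹ * y ∈ X)
        = Y.filter (fun x => x⁻¹ * y ∈ Z ∨ x⁻¹ * y ∈ Y) := by
      apply Finset.filter_congr
      intro x hx
      constructor
      · intro hX'
        by_cases hh : x⁻¹ * y ∈ H
        · exact Or.inl (memZ.mpr ⟨hX', hh⟩)
        · exact Or.inr (memY.mpr ⟨hX', hh⟩)
      · rintro (h | h)
        · exact (memZ.mp h).1
        · exact (memY.mp h).1
    have hdd : Disjoint (Y.filter (fun x => x⁻¹ * y ∈ Z)) (Y.filter (fun x => x⁻¹ * y ∈ Y)) := by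
      rw [Finset.disjoint_left]
      intro a ha hb
      exact Finset.disjoint_left.mp hdisjZY (Finset.mem_filter.mp ha).2 (Finset.mem_filter.mp hb).2
    rw [hcongr, Finset.filter_or, Finset.card_union_of_disjoint hdd,
      hbij Z (fun b hb => (memZ.mp hb).2) y hy]
  have hMy : ∀ y, y ∈ Y → (X.filter (fun x => x⁻¹ * y ∈ X)).card
      = 2 * Z.card + (Y.filter (fun x => x⁻¹ * y ∈ Y)).card := by
    intro y hy
    rw [card_filter_split hunion hdisjZY (fun x => x⁻¹ * y ∈ X), hZfull y hy, hYpart y hy]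
    ring
  have htYub : ∀ y, y ∈ Y →
      (Y.filter (fun x => x⁻¹ * y ∈ Y)).card + (subgroupFinset H).card ≤ Y.card := by
    intro y hy
    have hH : (Y.filter (fun x => x⁻¹ * y ∈ subgroupFinset H)).card = (subgroupFinset H).card :=
      hbij (subgroupFinset H) (fun b hb => memHf.mp hb) y hy
    have hdd : Disjoint (Y.filter (fun x => x⁻¹ * y ∈ Y))
        (Y.filter (fun x => x⁻¹ * y ∈ subgroupFinset H)) := by
      rw [Finset.disjoint_left]
      intro a ha hb
      exact (memY.mp (Finset.mem_filter.mp ha).2).2 (memHf.mp (Finset.mem_filter.mp hb).2)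
    calc (Y.filter (fun x => x⁻¹ * y ∈ Y)).card + (subgroupFinset H).card
        = ((Y.filter (fun x => x⁻¹ * y ∈ Y)) ∪ (Y.filter (fun x => x⁻¹ * y ∈ subgroupFinset H))).card := by
          rw [Finset.card_union_of_disjoint hdd, hH]
      _ ≤ Y.card := Finset.card_le_card
          (Finset.union_subset (Finset.filter_subset _ _) (Finset.filter_subset _ _))
  have hMz : ∀ z, z ∈ Z → (X.filter (fun x => x⁻¹ * z ∈ X)).card
      = Y.card + (Z.filter (fun x => x⁻¹ * z ∈ Z)).card := by
    intro z hz
    have hYfull : (Y.filter (fun x => x⁻¹ * z ∈ X)).card = Y.card := by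
      rw [Finset.filter_true_of_mem]
      intro x hx
      exact (memY.mp (hYr z (memZ.mp hz).2 (hYinv x hx))).1
    rw [card_filter_split hunion hdisjZY (fun x => x⁻¹ * z ∈ X), hZtoX z hz, hYfull,
      Nat.add_comm]
  have hZsubHf : Z ⊆ subgroupFinset H := fun x hx => memHf.mpr (memZ.mp hx).2
  have hsZlb : ∀ z, z ∈ Z →
      2 * Z.card ≤ (Z.filter (fun x => x⁻¹ * z ∈ Z)).card + (subgroupFinset H).card := by
    intro z hz
    have hsplit : (Z.filter (fun x => x⁻¹ * z ∈ Z)).card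
        + (Z.filter (fun x => ¬(x⁻¹ * z ∈ Z))).card = Z.card := by
      exact Finset.card_filter_add_card_filter_not (fun x => x⁻¹ * z ∈ Z)
    have hinj : (Z.filter (fun x => ¬(x⁻¹ * z ∈ Z))).card ≤ (subgroupFinset H \ Z).card := by
      apply Finset.card_le_card_of_injOn (fun x => x⁻¹ * z)
      · intro a ha
        have haZ := (Finset.mem_filter.mp ha).1
        exact Finset.mem_sdiff.mpr ⟨memHf.mpr (H.mul_mem (H.inv_mem (memZ.mp haZ).2) (memZ.mp hz).2),
          (Finset.mem_filter.mp ha).2⟩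
      · intro a _ b _ hab
        exact inv_injective (mul_right_cancel hab)
    have hcard : (subgroupFinset H \ Z).card + Z.card = (subgroupFinset H).card :=
      Finset.card_sdiff_add_card_eq_card hZsubHf
    omega
  -- the two exact equalities
  have E1 : ∀ z, z ∈ Z →
      (Z.filter (fun x => x⁻¹ * z ∈ Z)).card + (subgroupFinset H).card = 2 * Z.card := by
    intro z hz
    have h := hconst y0 hy0X z (memZ.mp hz).1
    rw [hMy y0 hy0Y, hMz z hz] at h
    have h4 := htYub y0 hy0Y
    have h5 := hsZlb z hz
    omega
  have E2 : ∀ y, y ∈ Y →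
      (Y.filter (fun x => x⁻¹ * y ∈ Y)).card + (subgroupFinset H).card = Y.card := by
    intro y hy
    have h := hconst y (memY.mp hy).1 z0 hz0X
    rw [hMy y hy, hMz z0 hz0Z] at h
    have h4 := E1 z0 hz0Z
    have h5 := htYub y hy
    omega
  -- Step C : products of two elements of Y lie in X ∪ H
  have hYY : ∀ a, a ∈ Y → ∀ b, b ∈ Y → a⁻¹ * b ∈ X ∨ a⁻¹ * b ∈ H := by
    intro a ha b hb
    have hH : (Y.filter (fun x => x⁻¹ * b ∈ subgroupFinset H)).card = (subgroupFinset H).card :=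
      hbij (subgroupFinset H) (fun c hc => memHf.mp hc) b hb
    have hdd : Disjoint (Y.filter (fun x => x⁻¹ * b ∈ Y))
        (Y.filter (fun x => x⁻¹ * b ∈ subgroupFinset H)) := by
      rw [Finset.disjoint_left]
      intro c h4 h5
      exact (memY.mp (Finset.mem_filter.mp h4).2).2 (memHf.mp (Finset.mem_filter.mp h5).2)
    have hsub : (Y.filter (fun x => x⁻¹ * b ∈ Y)) ∪ (Y.filter (fun x => x⁻¹ * b ∈ subgroupFinset H)) ⊆ Y :=
      Finset.union_subset (Finset.filter_subset _ _) (Finset.filter_subset _ _)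
    have hcards : ((Y.filter (fun x => x⁻¹ * b ∈ Y)) ∪ (Y.filter (fun x => x⁻¹ * b ∈ subgroupFinset H))).card = Y.card := by
      rw [Finset.card_union_of_disjoint hdd, hH, E2 b hb]
    have hEq := Finset.eq_of_subset_of_card_le hsub (le_of_eq hcards.symm)
    have haU : a ∈ (Y.filter (fun x => x⁻¹ * b ∈ Y)) ∪ (Y.filter (fun x => x⁻¹ * b ∈ subgroupFinset H)) := by
      rw [hEq]; exact ha
    rcases Finset.mem_union.mp haU with h4 | h4
    · exact Or.inl (memY.mp (Finset.mem_filter.mp h4).2).1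
    · exact Or.inr (memHf.mp (Finset.mem_filter.mp h4).2)
  have hmulYY : ∀ a, a ∈ Y → ∀ b, b ∈ Y → a * b ∈ X ∨ a * b ∈ H := by
    intro a ha b hb
    have h4 := hYY a⁻¹ (hYinv a ha) b hb
    rwa [inv_inv] at h4
  -- Step D : every element of H outside X is in the radical
  have hd1 : ∑ h ∈ subgroupFinset H, (Z.filter (fun x => x⁻¹ * h ∈ Z)).card = Z.card * Z.card := by
    have h1 : ∀ h ∈ subgroupFinset H, (Z.filter (fun x => x⁻¹ * h ∈ Z)).card
        = ∑ x ∈ Z, if x⁻¹ * h ∈ Z then 1 else 0 := fun h _ => Finset.card_filter _ _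
    rw [Finset.sum_congr rfl h1, Finset.sum_comm]
    have h2 : ∀ x ∈ Z, (∑ h ∈ subgroupFinset H, if x⁻¹ * h ∈ Z then 1 else 0) = Z.card := by
      intro x hx
      rw [← Finset.card_filter]
      refine Finset.card_bij' (fun h _ => x⁻¹ * h) (fun b _ => x * b) ?_ ?_ ?_ ?_
      · intro a ha; exact (Finset.mem_filter.mp ha).2
      · intro b hb
        refine Finset.mem_filter.mpr ⟨memHf.mpr (H.mul_mem (memZ.mp hx).2 (memZ.mp hb).2), ?_⟩
        have h4 : x⁻¹ * (x * b) = b := by group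
        rw [h4]; exact hb
      · intro a _; group
      · intro b _; group
    rw [Finset.sum_congr rfl h2, Finset.sum_const, smul_eq_mul]
  have hd6 : ∀ d, d ∈ subgroupFinset H \ Z → (Z.filter (fun x => x⁻¹ * d ∈ Z)).card = Z.card := by
    by_contra hcon
    push_neg at hcon
    obtain ⟨d0, hd0, hne0⟩ := hcon
    have hlt : (Z.filter (fun x => x⁻¹ * d0 ∈ Z)).card < Z.card :=
      lt_of_le_of_ne (Finset.card_filter_le _ _) hne0
    have hsum_lt : ∑ d ∈ subgroupFinset H \ Z, (Z.filter (fun x => x⁻¹ * d ∈ Z)).card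
        < (subgroupFinset H \ Z).card * Z.card := by
      have h4 := Finset.sum_lt_sum (s := subgroupFinset H \ Z)
        (f := fun d => (Z.filter (fun x => x⁻¹ * d ∈ Z)).card) (g := fun _ => Z.card)
        (fun i _ => Finset.card_filter_le _ _) ⟨d0, hd0, hlt⟩
      rwa [Finset.sum_const, smul_eq_mul] at h4
    have hsdiff : ∑ d ∈ subgroupFinset H \ Z, (Z.filter (fun x => x⁻¹ * d ∈ Z)).card
        + ∑ z ∈ Z, (Z.filter (fun x => x⁻¹ * z ∈ Z)).card
        = ∑ h ∈ subgroupFinset H, (Z.filter (fun x => x⁻¹ * h ∈ Z)).card :=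
      Finset.sum_sdiff hZsubHf
    have hsumZ : ∑ z ∈ Z, (Z.filter (fun x => x⁻¹ * z ∈ Z)).card
        + Z.card * (subgroupFinset H).card = 2 * (Z.card * Z.card) := by
      have h4 : ∑ z ∈ Z, ((Z.filter (fun x => x⁻¹ * z ∈ Z)).card + (subgroupFinset H).card)
          = ∑ z ∈ Z, 2 * Z.card := Finset.sum_congr rfl (fun z hz => E1 z hz)
      rw [Finset.sum_add_distrib, Finset.sum_const, smul_eq_mul, Finset.sum_const, smul_eq_mul] at h4
      rw [show Z.card * (2 * Z.card) = 2 * (Z.card * Z.card) from by ring] at h4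
      exact h4
    have hcc : (subgroupFinset H \ Z).card + Z.card = (subgroupFinset H).card :=
      Finset.card_sdiff_add_card_eq_card hZsubHf
    have e1 : ∑ d ∈ subgroupFinset H \ Z, (Z.filter (fun x => x⁻¹ * d ∈ Z)).card
        + ∑ z ∈ Z, (Z.filter (fun x => x⁻¹ * z ∈ Z)).card = Z.card * Z.card := hsdiff.trans hd1
    have hm : Z.card * (subgroupFinset H).card
        = Z.card * (subgroupFinset H \ Z).card + Z.card * Z.card := by rw [← hcc]; ring
    have e2 : ∑ z ∈ Z, (Z.filter (fun x => x⁻¹ * z ∈ Z)).card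
        + Z.card * (subgroupFinset H \ Z).card = Z.card * Z.card := by
      have h4 := hsumZ
      rw [hm] at h4
      have h5 : (∑ z ∈ Z, (Z.filter (fun x => x⁻¹ * z ∈ Z)).card
          + Z.card * (subgroupFinset H \ Z).card) + Z.card * Z.card
          = Z.card * Z.card + Z.card * Z.card := by
        rw [← add_assoc] at h4
        rw [h4, two_mul]
      exact Nat.add_right_cancel h5
    have e3 : ∑ d ∈ subgroupFinset H \ Z, (Z.filter (fun x => x⁻¹ * d ∈ Z)).card
        = Z.card * (subgroupFinset H \ Z).card := by
      have h5 : ∑ z ∈ Z, (Z.filter (fun x => x⁻¹ * z ∈ Z)).card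
          + ∑ d ∈ subgroupFinset H \ Z, (Z.filter (fun x => x⁻¹ * d ∈ Z)).card
          = ∑ z ∈ Z, (Z.filter (fun x => x⁻¹ * z ∈ Z)).card
          + Z.card * (subgroupFinset H \ Z).card := by
        rw [Nat.add_comm (∑ z ∈ Z, (Z.filter (fun x => x⁻¹ * z ∈ Z)).card), e1, e2]
      exact Nat.add_left_cancel h5
    rw [e3, Nat.mul_comm] at hsum_lt
    exact lt_irrefl _ hsum_lt
  have zid : ∀ d, d ∈ H → d ∉ X → ∀ x, x ∈ Z → x⁻¹ * d ∈ Z := by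
    intro d hdH hdX x hx
    have hdmem : d ∈ subgroupFinset H \ Z :=
      Finset.mem_sdiff.mpr ⟨memHf.mpr hdH, fun hc => hdX (memZ.mp hc).1⟩
    have hfe : Z.filter (fun x => x⁻¹ * d ∈ Z) = Z :=
      Finset.eq_of_subset_of_card_le (Finset.filter_subset _ _) (le_of_eq (hd6 d hdmem).symm)
    have hx' : x ∈ Z.filter (fun x => x⁻¹ * d ∈ Z) := by rw [hfe]; exact hx
    exact (Finset.mem_filter.mp hx').2
  have hZdr : ∀ d, d ∈ H → d ∉ X → ∀ w, w ∈ Z → w * d ∈ Z := by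
    intro d hdH hdX w hw
    have h4 := zid d hdH hdX w⁻¹ (hZinv w hw)
    rwa [inv_inv] at h4
  have hZdl : ∀ d, d ∈ H → d ∉ X → ∀ w, w ∈ Z → d * w ∈ Z := by
    intro d hdH hdX w hw
    have hdinvX : d⁻¹ ∉ X := by
      intro hc
      have h4 := hXinv _ hc
      rw [inv_inv] at h4
      exact hdX h4
    have h4 : w⁻¹ * d⁻¹ ∈ Z := hZdr d⁻¹ (H.inv_mem hdH) hdinvX w⁻¹ (hZinv w hw)
    have h5 := hZinv _ h4
    rwa [mul_inv_rev, inv_inv, inv_inv] at h5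
  have hradmem : ∀ d, d ∈ H → d ∉ X → d ∈ radSubgroup X := by
    intro d hdH hdX
    rw [mem_rad_iff]
    constructor
    · apply Finset.eq_of_subset_of_card_le
      · intro g hg
        obtain ⟨x, hx, rfl⟩ := Finset.mem_image.mp hg
        by_cases hxH : x ∈ H
        · exact (memZ.mp (hZdl d hdH hdX x (memZ.mpr ⟨hx, hxH⟩))).1
        · exact (memY.mp (hYl d hdH (memY.mpr ⟨hx, hxH⟩))).1
      · rw [Finset.card_image_of_injective X (mul_right_injective d)]
    · apply Finset.eq_of_subset_of_card_le
      · intro g hg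
        obtain ⟨x, hx, rfl⟩ := Finset.mem_image.mp hg
        by_cases hxH : x ∈ H
        · exact (memZ.mp (hZdr d hdH hdX x (memZ.mpr ⟨hx, hxH⟩))).1
        · exact (memY.mp (hYr d hdH (memY.mpr ⟨hx, hxH⟩))).1
      · rw [Finset.card_image_of_injective X (mul_left_injective d)]
  -- basic facts about rad X
  have h1X : (1 : G) ∉ X := by
    intro hc
    have hXne : X ≠ {1} := by
      intro he
      rw [he, Finset.mem_singleton] at hy0X
      rw [hy0X] at hy0H
      exact hy0H H.one_mem
    exact Finset.disjoint_left.mp (hS.disj X hX {1} hS.one_mem hXne) hc (Finset.mem_singleton_self 1)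
  have hradX_disj : ∀ r, r ∈ radSubgroup X → r ∉ X := by
    intro r hr hrX
    have h4 : r * r⁻¹ ∈ X := rad_left hr (hXinv r hrX)
    rw [mul_inv_cancel] at h4
    exact h1X h4
  have hradX_H : ∀ r, r ∈ radSubgroup X → r ∈ H := by
    intro r hr
    by_contra hrH
    have h4 : z0 ∈ X.image (r * ·) := by rw [(mem_rad_iff.mp hr).1]; exact hz0X
    obtain ⟨x, hxX, hxe⟩ := Finset.mem_image.mp h4
    have hre : r = z0 * x⁻¹ := by rw [← hxe]; group
    by_cases hxH : x ∈ H
    · exact hrH (hre ▸ H.mul_mem hz0H (H.inv_mem hxH))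
    · have hxY : x ∈ Y := memY.mpr ⟨hxX, hxH⟩
      have h5 : z0 * x⁻¹ ∈ Y := hYl z0 hz0H (hYinv x hxY)
      exact hradX_disj r hr (hre ▸ (memY.mp h5).1)
  have hradX_clo : ∀ r, r ∈ radSubgroup X → r ∈ Subgroup.closure (X : Set G) := by
    intro r hr
    have h4 : r * z0 ∈ X := rad_left hr hz0X
    have h5 : r = (r * z0) * z0⁻¹ := by group
    rw [h5]
    exact Subgroup.mul_mem _ (Subgroup.subset_closure h4)
      (Subgroup.inv_mem _ (Subgroup.subset_closure hz0X))
  -- the subgroup X ∪ H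
  let K : Subgroup G :=
    { carrier := (X : Set G) ∪ (H : Set G)
      one_mem' := Or.inr H.one_mem
      mul_mem' := by
        rintro a b (ha | ha) (hb | hb)
        · have haX : a ∈ X := ha
          have hbX : b ∈ X := hb
          by_cases haH : a ∈ H
          · by_cases hbH : b ∈ H
            · exact Or.inr (H.mul_mem haH hbH)
            · exact Or.inl ((memY.mp (hYl a haH (memY.mpr ⟨hbX, hbH⟩))).1)
          · by_cases hbH : b ∈ H
            · exact Or.inl ((memY.mp (hYr b hbH (memY.mpr ⟨haX, haH⟩))).1)
            · rcases hmulYY a (memY.mpr ⟨haX, haH⟩) b (memY.mpr ⟨hbX, hbH⟩) with h4 | h4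
              · exact Or.inl h4
              · exact Or.inr h4
        · have haX : a ∈ X := ha
          by_cases haH : a ∈ H
          · exact Or.inr (H.mul_mem haH hb)
          · exact Or.inl ((memY.mp (hYr b hb (memY.mpr ⟨haX, haH⟩))).1)
        · have hbX : b ∈ X := hb
          by_cases hbH : b ∈ H
          · exact Or.inr (H.mul_mem ha hbH)
          · exact Or.inl ((memY.mp (hYl a ha (memY.mpr ⟨hbX, hbH⟩))).1)
        · exact Or.inr (H.mul_mem ha hb)
      inv_mem' := by
        rintro a (ha | ha)
        · exact Or.inl (hXinv a ha)
        · exact Or.inr (H.inv_mem ha) }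
  have hclos : Subgroup.closure (X : Set G) ≤ K :=
    (Subgroup.closure_le K).mpr (fun x hx => Or.inl hx)
  constructor
  · ext g
    simp only [Set.mem_diff, SetLike.mem_coe, Finset.mem_coe]
    constructor
    · intro hg
      exact ⟨Subgroup.subset_closure hg, fun hmem => hradX_disj g hmem hg⟩
    · rintro ⟨hgC, hgR⟩
      rcases hclos hgC with hgX | hgH
      · exact hgX
      · by_contra hgX
        exact hgR (hradmem g hgH hgX)
  · intro r hr
    exact Subgroup.mem_inf.mpr ⟨hradX_H r hr, hradX_clo r hr⟩
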